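/- For any n ≥ 2, any nonnegative reals c_1,…,c_n, and any symmetric nonnegative kernel φ_{i,j}, the weighted sum ∑_{i=1}^{n} i·C_i^n(c) of the right-hand sides of the truncated non-conservative Safronov-Dubovski system equals −∑_{j=1}^{n−1} j φ_{n,j} c_n c_j ≤ 0. Consequently, along any solution, the first moment (mass) μ_1(t) = ∑_{i=1}^{n} i c_i(t) satisfies μ_1(t) ≤ μ_1(0) for all t ≥ 0. -/

import Mathlib

open Finset

/-- Right-hand sides of the truncated non-conservative Safronov–Dubovski system. -/
noncomputable def Cn (n : ℕ) (φ : ℕ → ℕ → ℝ) (c : ℕ → ℝ) (i : ℕ) : ℝ :=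
  if i = 1 then -(φ 1 1 * c 1 ^ 2) - c 1 * ∑ j ∈ Icc 1 n, φ 1 j * c j
  else if i = n then c (n - 1) * ∑ j ∈ Icc 1 (n - 1), (j : ℝ) * φ (n - 1) j * c j
  else c (i - 1) * ∑ j ∈ Icc 1 (i - 1), (j : ℝ) * φ (i - 1) j * c j
    - c i * ∑ j ∈ Icc 1 i, (j : ℝ) * φ i j * c j
    - c i * ∑ j ∈ Icc i n, φ i j * c j

/-- The weighted sum `∑ i·C_i^n(c)` equals `−∑_{j<n} j φ_{n,j} c_n c_j ≤ 0`, and hence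
    the first moment of a solution is non-increasing: μ₁(t) ≤ μ₁(0) for t ≥ 0. -/
theorem stmt3 (n : ℕ) (hn : 2 ≤ n) (φ : ℕ → ℕ → ℝ)
    (hφnn : ∀ i j, 0 ≤ φ i j) (hφsym : ∀ i j, φ i j = φ j i) :
    (∀ c : ℕ → ℝ, (∀ i, 0 ≤ c i) →
      ∑ i ∈ Icc 1 n, (i : ℝ) * Cn n φ c i
        = -∑ j ∈ Icc 1 (n - 1), (j : ℝ) * φ n j * c n * c j ∧
      ∑ i ∈ Icc 1 n, (i : ℝ) * Cn n φ c i ≤ 0) ∧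
    (∀ c : ℕ → ℝ → ℝ, (∀ i t, 0 ≤ c i t) →
      (∀ i ∈ Icc 1 n, ∀ t : ℝ, HasDerivAt (c i) (Cn n φ (fun k => c k t) i) t) →
      ∀ t : ℝ, 0 ≤ t →
        ∑ i ∈ Icc 1 n, (i : ℝ) * c i t ≤ ∑ i ∈ Icc 1 n, (i : ℝ) * c i 0) := by
  have hn1 : n - 1 + 1 = n := by omega
  -- The key algebraic identity, for arbitrary `c` (no nonnegativity needed).
  have key : ∀ c : ℕ → ℝ,
      ∑ i ∈ Icc 1 n, (i : ℝ) * Cn n φ c i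
        = -∑ j ∈ Icc 1 (n - 1), (j : ℝ) * φ n j * c n * c j := by
    intro c
    set B : ℕ → ℝ := fun i => c i * ∑ j ∈ Icc 1 i, (j : ℝ) * φ i j * c j with hB
    set D : ℕ → ℝ := fun i => c i * ∑ j ∈ Icc i n, φ i j * c j with hD
    have hsplit : ∀ i ∈ Icc 1 n, (i : ℝ) * Cn n φ c i
        = (if 2 ≤ i then (i : ℝ) * B (i - 1) else 0)
          - (if i ≤ n - 1 then (i : ℝ) * B i + (i : ℝ) * D i else 0) := by
      intro i hi
      simp only [mem_Icc] at hi
      rcases eq_or_ne i 1 with rfl | h1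
      · have h2 : ¬ (2 ≤ 1) := by omega
        have h3 : 1 ≤ n - 1 := by omega
        simp only [Cn, if_pos rfl, if_pos h3, if_neg h2, hB, hD]
        simp [Finset.Icc_self]
        ring
      · rcases eq_or_ne i n with rfl | h2
        · have hif : ¬ (i ≤ i - 1) := by omega
          have h2i : 2 ≤ i := by omega
          have hC : Cn i φ c i
              = c (i - 1) * ∑ j ∈ Icc 1 (i - 1), (j : ℝ) * φ (i - 1) j * c j := by
            simp [Cn, h1]
          rw [hC, if_pos h2i, if_neg hif]
          simp only [hB]
          ring
        · have hm1 : 2 ≤ i := by omega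
          have hm2 : i ≤ n - 1 := by omega
          simp only [Cn, if_neg h1, if_neg h2, if_pos hm1, if_pos hm2, hB, hD]
          ring
    rw [Finset.sum_congr rfl hsplit, Finset.sum_sub_distrib]
    have hA : (∑ i ∈ Icc 1 n, if 2 ≤ i then (i : ℝ) * B (i - 1) else 0)
        = ∑ k ∈ Icc 1 (n - 1), ((k : ℝ) + 1) * B k := by
      rw [← Finset.sum_filter]
      have hf : (Icc 1 n).filter (fun i => 2 ≤ i) = Icc 2 n := by
        ext a; simp only [mem_filter, mem_Icc]; omega
      rw [hf]
      refine Finset.sum_nbij' (fun i => i - 1) (fun k => k + 1) ?_ ?_ ?_ ?_ ?_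
      · intro i hi; simp only [mem_Icc] at *; omega
      · intro k hk; simp only [mem_Icc] at *; omega
      · intro i hi; simp only [mem_Icc] at hi; omega
      · intro k hk; simp only [mem_Icc] at hk; omega
      · intro i hi; simp only [mem_Icc] at hi
        have : ((i - 1 : ℕ) : ℝ) + 1 = (i : ℝ) := by
          have : (1:ℕ) ≤ i := by omega
          push_cast [Nat.cast_sub this]; ring
        rw [this]
    have hBif : (∑ i ∈ Icc 1 n, if i ≤ n - 1 then (i : ℝ) * B i + (i : ℝ) * D i else 0)
        = ∑ i ∈ Icc 1 (n - 1), ((i : ℝ) * B i + (i : ℝ) * D i) := by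
      rw [← Finset.sum_filter]
      congr 1
      ext a; simp only [mem_filter, mem_Icc]; omega
    rw [hA, hBif, ← Finset.sum_sub_distrib]
    have hstep : ∀ k ∈ Icc 1 (n - 1),
        ((k : ℝ) + 1) * B k - ((k : ℝ) * B k + (k : ℝ) * D k) = B k - (k : ℝ) * D k := by
      intro k _; ring
    rw [Finset.sum_congr rfl hstep, Finset.sum_sub_distrib]
    -- Expand `k * D k` and split off the `j = n` term.
    have hDexp : ∀ k ∈ Icc 1 (n - 1), (k : ℝ) * D k
        = (∑ j ∈ Icc k (n - 1), (k : ℝ) * φ k j * c k * c j) + (k : ℝ) * φ k n * c k * c n := by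
      intro k hk
      simp only [mem_Icc] at hk
      have hkn : k ≤ n - 1 + 1 := by omega
      simp only [hD]
      rw [← hn1, Finset.sum_Icc_succ_top hkn, hn1]
      rw [mul_add, mul_add, Finset.mul_sum, Finset.mul_sum]
      congr 1
      · exact Finset.sum_congr rfl fun j _ => by ring
      · ring
    rw [Finset.sum_congr rfl hDexp, Finset.sum_add_distrib]
    -- Swap the double sum and use symmetry to identify it with `∑ B k`.
    have hswap : (∑ k ∈ Icc 1 (n - 1), ∑ j ∈ Icc k (n - 1), (k : ℝ) * φ k j * c k * c j)
        = ∑ j ∈ Icc 1 (n - 1), B j := by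
      have h1 : ∀ a b : ℕ, Icc a b = Ico a (b + 1) := fun a b => by
        ext x; simp [mem_Icc, mem_Ico]
      calc (∑ k ∈ Icc 1 (n - 1), ∑ j ∈ Icc k (n - 1), (k : ℝ) * φ k j * c k * c j)
          = ∑ k ∈ Ico 1 n, ∑ j ∈ Ico k n, (k : ℝ) * φ k j * c k * c j := by
            rw [h1 1 (n-1), hn1]
            refine Finset.sum_congr rfl fun k _ => by rw [h1 k (n-1), hn1]
        _ = ∑ j ∈ Ico 1 n, ∑ k ∈ Ico 1 (j + 1), (k : ℝ) * φ k j * c k * c j :=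
            Finset.sum_Ico_Ico_comm 1 n _
        _ = ∑ j ∈ Icc 1 (n - 1), B j := by
            rw [h1 1 (n-1), hn1]
            refine Finset.sum_congr rfl fun j _ => ?_
            rw [← h1 1 j]
            simp only [hB, Finset.mul_sum]
            exact Finset.sum_congr rfl fun k _ => by rw [hφsym k j]; ring
    rw [hswap]
    have hlast : (∑ k ∈ Icc 1 (n - 1), (k : ℝ) * φ k n * c k * c n)
        = ∑ j ∈ Icc 1 (n - 1), (j : ℝ) * φ n j * c n * c j :=
      Finset.sum_congr rfl fun k _ => by rw [hφsym k n]; ring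
    rw [hlast]
    ring
  constructor
  · intro c hc
    refine ⟨key c, ?_⟩
    rw [key c]
    simp only [neg_nonpos]
    refine Finset.sum_nonneg fun j _ => ?_
    have := hφnn n j
    have := hc n
    have := hc j
    positivity
  · intro c hc hderiv t ht
    have hμ : ∀ s : ℝ, HasDerivAt (fun u => ∑ i ∈ Icc 1 n, (i : ℝ) * c i u)
        (∑ i ∈ Icc 1 n, (i : ℝ) * Cn n φ (fun k => c k s) i) s := by
      intro s
      exact HasDerivAt.fun_sum fun i hi => (hderiv i hi s).const_mul _
    have hdiff : Differentiable ℝ (fun u => ∑ i ∈ Icc 1 n, (i : ℝ) * c i u) :=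
      fun s => (hμ s).differentiableAt
    have hanti : Antitone (fun u => ∑ i ∈ Icc 1 n, (i : ℝ) * c i u) := by
      refine antitone_of_deriv_nonpos hdiff fun s => ?_
      rw [(hμ s).deriv, key (fun k => c k s)]
      simp only [neg_nonpos]
      refine Finset.sum_nonneg fun j _ => ?_
      have := hφnn n j
      have := hc n s
      have := hc j s
      positivity
    exact hanti ht
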